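/- arXiv:2210.03372 — 2 statements merged into one kernel-verified Lean document; each statement's English description precedes it below -/
import Mathlib

section
/- (Gradient alignment dominates pseudo-gradient alignment, deterministic form.) Let w_1,...,w_m ∈ ℝ^n be pairwise orthogonal, x_1, x_2 ∈ ℝ^n, α ≥ 0. Define g_1 = (2/m)·Σ_i ReLU(w_i·x_1)·w_i, g_2 = (2/m)·Σ_i ReLU(w_i·x_2 + (2α/m)·ReLU(w_i·x_1)·‖w_i‖²)·w_i, and g_2* = (2/m)·Σ_i ReLU(w_i·x_2)·w_i. Then g_2·g_1 ≥ g_2*·g_1. -/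
open RealInnerProductSpace

/-- Gradient alignment dominates pseudo-gradient alignment (deterministic form):
with pairwise orthogonal rows `wᵢ`, `g₂·g₁ ≥ g₂*·g₁` where `g₁, g₂, g₂*` are the L4A
gradients at the first sample, at the second sample after the update `α·g₁`, and at the
second sample ignoring the update, respectively. -/
theorem stmt_10 (m n : ℕ) (w : Fin m → EuclideanSpace ℝ (Fin n))
    (horth : ∀ i j, i ≠ j → ⟪w i, w j⟫ = 0)
    (x₁ x₂ : EuclideanSpace ℝ (Fin n)) (α : ℝ) (hα : 0 ≤ α)
    (g₁ g₂ g₂star : EuclideanSpace ℝ (Fin n))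
    (hg₁ : g₁ = (2 / (m : ℝ)) • ∑ i, (max ⟪w i, x₁⟫ 0) • w i)
    (hg₂ : g₂ = (2 / (m : ℝ)) • ∑ i,
      (max (⟪w i, x₂⟫ + (2 * α / (m : ℝ)) * max ⟪w i, x₁⟫ 0 * ‖w i‖ ^ 2) 0) • w i)
    (hg₂star : g₂star = (2 / (m : ℝ)) • ∑ i, (max ⟪w i, x₂⟫ 0) • w i) :
    ⟪g₂, g₁⟫ ≥ ⟪g₂star, g₁⟫ := by
  subst hg₁ hg₂ hg₂star
  have key : ∀ (f : Fin m → ℝ),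
      ⟪∑ i, f i • w i, ∑ i, (max ⟪w i, x₁⟫ 0) • w i⟫
        = ∑ i, f i * max ⟪w i, x₁⟫ 0 * ‖w i‖ ^ 2 := by
    intro f
    rw [sum_inner]
    refine Finset.sum_congr rfl fun i _ => ?_
    rw [inner_sum, Finset.sum_eq_single i]
    · rw [real_inner_smul_left, real_inner_smul_right, real_inner_self_eq_norm_sq]
      ring
    · intro j _ hj
      rw [real_inner_smul_left, real_inner_smul_right, horth i j hj.symm]
      ring
    · simp
  simp only [real_inner_smul_left, real_inner_smul_right, key]
  have hc : (0:ℝ) ≤ 2 / (m:ℝ) * (2 / (m:ℝ)) := by positivity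
  refine mul_le_mul_of_nonneg_left (mul_le_mul_of_nonneg_left ?_ ?_) ?_ <;>
    try positivity
  refine Finset.sum_le_sum fun i _ => ?_
  have h1 : max ⟪w i, x₂⟫ 0 ≤
      max (⟪w i, x₂⟫ + 2 * α / (m:ℝ) * max ⟪w i, x₁⟫ 0 * ‖w i‖ ^ 2) 0 := by
    apply max_le_max _ le_rfl
    have hpos : 0 ≤ 2 * α / (m:ℝ) * max ⟪w i, x₁⟫ 0 * ‖w i‖ ^ 2 :=
      mul_nonneg (mul_nonneg (by positivity) (le_max_right _ _)) (sq_nonneg _)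
    linarith
  have h2 : (0:ℝ) ≤ max ⟪w i, x₁⟫ 0 * ‖w i‖ ^ 2 := by positivity
  calc max ⟪w i, x₂⟫ 0 * max ⟪w i, x₁⟫ 0 * ‖w i‖ ^ 2
      = max ⟪w i, x₂⟫ 0 * (max ⟪w i, x₁⟫ 0 * ‖w i‖ ^ 2) := by ring
    _ ≤ _ := by
        rw [mul_assoc]
        exact mul_le_mul_of_nonneg_right h1 h2
end

section
/- Under the setup of the previous statement, g_2·g_1 − g_2*·g_1 = (4/m²)·Σ_i [ReLU(w_i·x_2 + (2α/m)·ReLU(w_i·x_1)·‖w_i‖²) − ReLU(w_i·x_2)]·ReLU(w_i·x_1)·‖w_i‖², and each summand is nonnegative. -/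
open RealInnerProductSpace

lemma aux_inner_sum {m n : ℕ} (w : Fin m → EuclideanSpace ℝ (Fin n))
    (horth : ∀ i j, i ≠ j → ⟪w i, w j⟫ = 0) (a b : Fin m → ℝ) (c : ℝ) :
    ⟪c • ∑ i, a i • w i, c • ∑ i, b i • w i⟫ = c ^ 2 * ∑ i, a i * b i * ‖w i‖ ^ 2 := by
  have key : ⟪∑ i, a i • w i, ∑ i, b i • w i⟫ = ∑ i, a i * b i * ‖w i‖ ^ 2 := by
    rw [sum_inner]
    apply Finset.sum_congr rfl
    intro i _
    rw [inner_sum, Finset.sum_eq_single i]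
    · rw [real_inner_smul_left, real_inner_smul_right, real_inner_self_eq_norm_sq]; ring
    · intro j _ hj
      rw [real_inner_smul_left, real_inner_smul_right, horth i j (Ne.symm hj)]; ring
    · intro h; exact absurd (Finset.mem_univ i) h
  rw [real_inner_smul_left, real_inner_smul_right, key]; ring

/-- Explicit expansion of the gradient-alignment difference: with pairwise orthogonal `wᵢ`,
`g₂·g₁ − g₂*·g₁ = (4/m²)·∑ᵢ [ReLU(wᵢ·x₂ + (2α/m)·ReLU(wᵢ·x₁)·‖wᵢ‖²) − ReLU(wᵢ·x₂)]·ReLU(wᵢ·x₁)·‖wᵢ‖²`,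
and each summand is nonnegative. -/
theorem stmt_11 (m n : ℕ) (w : Fin m → EuclideanSpace ℝ (Fin n))
    (horth : ∀ i j, i ≠ j → ⟪w i, w j⟫ = 0)
    (x₁ x₂ : EuclideanSpace ℝ (Fin n)) (α : ℝ) (hα : 0 ≤ α)
    (g₁ g₂ g₂star : EuclideanSpace ℝ (Fin n))
    (hg₁ : g₁ = (2 / (m : ℝ)) • ∑ i, (max ⟪w i, x₁⟫ 0) • w i)
    (hg₂ : g₂ = (2 / (m : ℝ)) • ∑ i,
      (max (⟪w i, x₂⟫ + (2 * α / (m : ℝ)) * max ⟪w i, x₁⟫ 0 * ‖w i‖ ^ 2) 0) • w i)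
    (hg₂star : g₂star = (2 / (m : ℝ)) • ∑ i, (max ⟪w i, x₂⟫ 0) • w i) :
    ⟪g₂, g₁⟫ - ⟪g₂star, g₁⟫ = (4 / (m : ℝ) ^ 2) * ∑ i,
        (max (⟪w i, x₂⟫ + (2 * α / (m : ℝ)) * max ⟪w i, x₁⟫ 0 * ‖w i‖ ^ 2) 0
          - max ⟪w i, x₂⟫ 0) * max ⟪w i, x₁⟫ 0 * ‖w i‖ ^ 2 ∧
      ∀ i, 0 ≤ (max (⟪w i, x₂⟫ + (2 * α / (m : ℝ)) * max ⟪w i, x₁⟫ 0 * ‖w i‖ ^ 2) 0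
          - max ⟪w i, x₂⟫ 0) * max ⟪w i, x₁⟫ 0 * ‖w i‖ ^ 2 := by
  constructor
  · rw [hg₁, hg₂, hg₂star, aux_inner_sum w horth, aux_inner_sum w horth]
    rw [← mul_sub, ← Finset.sum_sub_distrib]
    have : (2 / (m : ℝ)) ^ 2 = 4 / (m : ℝ) ^ 2 := by ring
    rw [this]
    congr 1
    apply Finset.sum_congr rfl
    intro i _
    ring
  · intro i
    apply mul_nonneg (mul_nonneg _ _) (sq_nonneg _)
    · apply sub_nonneg.2
      apply max_le_max _ le_rfl
      nlinarith [le_max_right ⟪w i, x₁⟫ 0, sq_nonneg ‖w i‖, Nat.cast_nonneg (α := ℝ) m, mul_nonneg (div_nonneg (mul_nonneg (by norm_num : (0:ℝ) ≤ 2) hα) (Nat.cast_nonneg (α := ℝ) m)) (mul_nonneg (le_max_right ⟪w i, x₁⟫ 0) (sq_nonneg ‖w i‖))]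
    · exact le_max_right _ _
end
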